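/- Under 2s-sparse observability (for every subset Λ ⊆ Fin p with |Λ| = p−2s, the stacked map O_Λ is injective), with p > 2s and x_true a plausible initial state consistent with some intact (p−s)-subset, the set of plausible initial states equals {x_true}. -/
import Mathlib


theorem stmt_6 {p s t n : ℕ} (hp : 2 * s < p)
    (O : Fin p → Matrix (Fin (t + 1)) (Fin n) ℝ)
    (Y : Fin p → Fin (t + 1) → ℝ)
    (hobs : ∀ Λ : Finset (Fin p), Λ.card = p - 2 * s →
      Function.Injective (fun x : Fin n → ℝ =>
        fun i : {i // i ∈ Λ} => (O i.1).mulVec x))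
    (xtrue : Fin n → ℝ) (Γ₀ : Finset (Fin p)) (hΓ₀ : Γ₀.card = p - s)
    (htrue : ∀ i ∈ Γ₀, (O i).mulVec xtrue = Y i) :
    {x : Fin n → ℝ | ∃ Γ : Finset (Fin p), Γ.card = p - s ∧
      ∀ i ∈ Γ, (O i).mulVec x = Y i} = {xtrue} := by
  ext x
  simp only [Set.mem_setOf_eq, Set.mem_singleton_iff]
  constructor
  · rintro ⟨Γ, hΓ, hx⟩
    have hcard : p - 2 * s ≤ (Γ ∩ Γ₀).card := by
      have h1 := Finset.card_union_add_card_inter Γ Γ₀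
      have h2 : (Γ ∪ Γ₀).card ≤ p := by
        simpa using Finset.card_le_card (Finset.subset_univ (Γ ∪ Γ₀))
      omega
    obtain ⟨Λ, hΛsub, hΛcard⟩ := Finset.exists_subset_card_eq hcard
    apply hobs Λ hΛcard
    funext i
    have hiΓ : i.1 ∈ Γ := (Finset.mem_inter.mp (hΛsub i.2)).1
    have hiΓ₀ : i.1 ∈ Γ₀ := (Finset.mem_inter.mp (hΛsub i.2)).2
    simp [hx i.1 hiΓ, htrue i.1 hiΓ₀]
  · rintro rfl
    exact ⟨Γ₀, hΓ₀, htrue⟩
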